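/- Let K = GF(q) ⊂ L = GF(q^2) with q = 2^s, and let w ∈ L \ K such that tr_{K/F_2}(1/τ(w)) = 0, where τ(w) = w + w^q. Then the multiplication (a,b) ⋆ (c,d) = (ac + bd^q + w b^q d, a^q d + bc) on L × L has no zero divisors; i.e., B_q(w) is a semifield of order q^4 with unit (1,0). -/

import Mathlib

section Aux

/-- The Frobenius `x ↦ x ^ 2` as an algebra equivalence over `ZMod 2`. -/
noncomputable def frobAlg (K : Type) [Field K] [Fintype K] [Algebra (ZMod 2) K]
    [CharP K 2] : K ≃ₐ[ZMod 2] K :=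
  AlgEquiv.ofBijective
    { toFun := fun x => x ^ 2
      map_one' := one_pow 2
      map_mul' := fun x y => mul_pow x y 2
      map_zero' := zero_pow (by norm_num)
      map_add' := fun x y => add_pow_char x y 2
      commutes' := fun r => by
        have hr : r ^ 2 = r := by revert r; decide
        show (algebraMap (ZMod 2) K r) ^ 2 = algebraMap (ZMod 2) K r
        rw [← map_pow, hr] }
    (Finite.injective_iff_bijective.mp (fun x y hxy => by
      have h2 : (2 : K) = 0 := by
        have := CharP.cast_eq_zero K 2; exact_mod_cast this
      have hxy' : x ^ 2 = y ^ 2 := hxy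
      have hsq : (x - y) ^ 2 = 0 := by
        linear_combination hxy' + (y ^ 2 - x * y) * h2
      have := pow_eq_zero_iff (n := 2) (by norm_num) |>.mp hsq
      exact sub_eq_zero.mp this))

lemma artin_schreier_two {K : Type} [Field K] [Fintype K] [Algebra (ZMod 2) K]
    {s : ℕ} (hs : 1 ≤ s) (hK : Fintype.card K = 2 ^ s)
    (e : K) (he : Algebra.trace (ZMod 2) K e = 0) : ∃ k : K, k ^ 2 + k = e := by
  haveI : CharP K 2 := charP_of_injective_algebraMap (algebraMap (ZMod 2) K).injective 2
  have h2K : (2 : K) = 0 := by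
    have := CharP.cast_eq_zero K 2; exact_mod_cast this
  -- the Artin–Schreier additive map
  set f : K →+ K :=
    { toFun := fun x => x ^ 2 + x
      map_zero' := by ring
      map_add' := fun x y => by linear_combination x * y * h2K } with hf
  set tr : K →+ ZMod 2 := (Algebra.trace (ZMod 2) K).toAddMonoidHom with htrdef
  have htrsurj : Function.Surjective tr := Algebra.trace_surjective (ZMod 2) K
  -- cardinality of the kernel of f
  have hkerf : (f.ker : Set K) = {0, 1} := by
    ext x
    simp only [SetLike.mem_coe, AddMonoidHom.mem_ker, Set.mem_insert_iff,
      Set.mem_singleton_iff, hf, AddMonoidHom.coe_mk, ZeroHom.coe_mk]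
    constructor
    · intro hx
      have : x * (x + 1) = 0 := by linear_combination hx
      rcases mul_eq_zero.mp this with h | h
      · exact Or.inl h
      · right; linear_combination h - h2K
    · rintro (rfl | rfl)
      · ring
      · linear_combination h2K
  have hcardkerf : Nat.card f.ker = 2 := by
    rw [← SetLike.coe_sort_coe, Nat.card_coe_set_eq, hkerf,
      Set.ncard_pair (zero_ne_one)]
  have hcardK : Nat.card K = 2 ^ s := by rw [Nat.card_eq_fintype_card, hK]
  have hrangef : Nat.card f.range * 2 = 2 ^ s := by
    have h1 := AddSubgroup.card_eq_card_quotient_mul_card_addSubgroup f.ker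
    have h2 := Nat.card_congr (QuotientAddGroup.quotientKerEquivRange f).toEquiv
    rw [hcardK, hcardkerf, h2] at h1
    omega
  have hkertr : Nat.card tr.ker * 2 = 2 ^ s := by
    have h1 := AddSubgroup.card_eq_card_quotient_mul_card_addSubgroup tr.ker
    have h2 := Nat.card_congr (QuotientAddGroup.quotientKerEquivOfSurjective tr htrsurj).toEquiv
    have h3 : Nat.card (ZMod 2) = 2 := by simp
    rw [hcardK, h2, h3] at h1
    omega
  -- range f ⊆ ker tr
  have hsub : (f.range : Set K) ⊆ (tr.ker : Set K) := by
    rintro x ⟨y, rfl⟩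
    have hfr : Algebra.trace (ZMod 2) K (y ^ 2) = Algebra.trace (ZMod 2) K y := by
      have := Algebra.trace_eq_of_algEquiv (frobAlg K) y
      simpa [frobAlg] using this
    show tr (y ^ 2 + y) = 0
    have : tr (y ^ 2 + y) = Algebra.trace (ZMod 2) K (y ^ 2) + Algebra.trace (ZMod 2) K y := by
      rw [htrdef]; simp
    rw [this, hfr]
    generalize (Algebra.trace (ZMod 2) K) y = t
    revert t; decide
  have hset : (f.range : Set K) = (tr.ker : Set K) := by
    apply Set.eq_of_subset_of_ncard_le hsub
    · rw [← Nat.card_coe_set_eq, ← Nat.card_coe_set_eq,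
        SetLike.coe_sort_coe, SetLike.coe_sort_coe]
      omega
  have hemem : e ∈ (tr.ker : Set K) := by
    show tr e = 0
    rw [htrdef]; exact he
  rw [← hset] at hemem
  obtain ⟨k, hk⟩ := hemem
  exact ⟨k, hk⟩

end Aux

theorem stmt_12 (s : ℕ) (hs : 1 ≤ s)
    (K L : Type) [Field K] [Fintype K] [Field L] [Fintype L] [Algebra K L]
    [Algebra (ZMod 2) K]
    (hK : Fintype.card K = 2 ^ s) (hL : Fintype.card L = 2 ^ (2 * s))
    (w : L) (hw : w ∉ Set.range (algebraMap K L))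
    (htr : Algebra.trace (ZMod 2) K ((Algebra.trace K L w)⁻¹) = 0)
    (mul : L × L → L × L → L × L)
    (hmul : ∀ a b c d : L, mul (a, b) (c, d) =
      (a * c + b * d ^ (2 ^ s) + w * b ^ (2 ^ s) * d, a ^ (2 ^ s) * d + b * c)) :
    (∀ x : L × L, mul x (1, 0) = x ∧ mul (1, 0) x = x) ∧
    (∀ x y : L × L, mul x y = 0 → x = 0 ∨ y = 0) := by
  classical
  haveI : CharP K 2 := charP_of_injective_algebraMap (algebraMap (ZMod 2) K).injective 2
  haveI : CharP L 2 := charP_of_injective_algebraMap (algebraMap K L).injective 2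
  have h2L : (2 : L) = 0 := by have := CharP.cast_eq_zero L 2; exact_mod_cast this
  have h2K : (2 : K) = 0 := by have := CharP.cast_eq_zero K 2; exact_mod_cast this
  have hq0 : (2 : ℕ) ^ s ≠ 0 := by positivity
  have hq1 : 1 < 2 ^ s := Nat.one_lt_two_pow_iff.mpr (by omega)
  set ι := algebraMap K L with hι
  have hinj : Function.Injective ι := (algebraMap K L).injective
  have hqK : ∀ k : K, k ^ 2 ^ s = k := fun k => by
    have := FiniteField.pow_card k; rwa [hK] at this
  have hfix : ∀ k : K, (ι k) ^ 2 ^ s = ι k := fun k => by rw [← map_pow, hqK]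
  have hq2 : ∀ x : L, (x ^ 2 ^ s) ^ 2 ^ s = x := fun x => by
    rw [← pow_mul, ← pow_add, ← two_mul, ← hL]
    exact FiniteField.pow_card x
  -- the fixed points of the `q`-power Frobenius are exactly the image of `K`
  have hrange : ∀ x : L, x ∈ Set.range ι ↔ x ^ 2 ^ s = x := by
    intro x
    constructor
    · rintro ⟨k, rfl⟩; exact hfix k
    · intro hx
      set P : Polynomial L := Polynomial.X ^ 2 ^ s - Polynomial.X with hP
      have hPne : P ≠ 0 := FiniteField.X_pow_card_sub_X_ne_zero L hq1
      have hPdeg : P.natDegree = 2 ^ s := FiniteField.X_pow_card_sub_X_natDegree_eq L hq1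
      set T : Finset L := Finset.univ.image ι with hT
      have hTcard : T.card = 2 ^ s := by
        rw [hT, Finset.card_image_of_injective _ hinj, Finset.card_univ, hK]
      have hTsub : T ⊆ P.roots.toFinset := by
        intro y hy
        rw [hT, Finset.mem_image] at hy
        obtain ⟨k, -, rfl⟩ := hy
        rw [Multiset.mem_toFinset, Polynomial.mem_roots hPne]
        simp [hP, Polynomial.IsRoot, hfix k]
      have hTeq : T = P.roots.toFinset := by
        apply Finset.eq_of_subset_of_card_le hTsub
        calc P.roots.toFinset.card ≤ Multiset.card P.roots := Multiset.toFinset_card_le _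
          _ ≤ P.natDegree := P.card_roots'
          _ = T.card := by rw [hPdeg, hTcard]
      have hx' : x ∈ P.roots.toFinset := by
        rw [Multiset.mem_toFinset, Polynomial.mem_roots hPne]
        simp [hP, Polynomial.IsRoot, hx]
      rw [← hTeq, hT, Finset.mem_image] at hx'
      obtain ⟨k, -, rfl⟩ := hx'
      exact ⟨k, rfl⟩
  have hfrobL : ∀ x y : L, (x + y) ^ 2 ^ s = x ^ 2 ^ s + y ^ 2 ^ s := fun x y =>
    add_pow_char_pow x y 2 s
  -- the trace from L to K is x ↦ x + x^q (read in L)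
  have htrw : ι (Algebra.trace K L w) = w + w ^ 2 ^ s := by
    have hfinrank : Module.finrank K L = 2 := by
      have hcard := Module.card_eq_pow_finrank (K := K) (V := L)
      rw [hK, hL, ← pow_mul] at hcard
      have h := Nat.pow_right_injective (le_refl 2) hcard
      rw [mul_comm 2 s] at h
      exact (Nat.eq_of_mul_eq_mul_left (by omega) h).symm
    let ψ' : L →ₐ[K] L :=
      { toFun := fun x => x ^ 2 ^ s
        map_one' := one_pow _
        map_mul' := fun x y => mul_pow x y _
        map_zero' := zero_pow hq0
        map_add' := fun x y => hfrobL x y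
        commutes' := fun r => hfix r }
    have hψinj : Function.Injective ψ' := fun x y hxy => by
      have hxy' : x ^ 2 ^ s = y ^ 2 ^ s := hxy
      have h : (x - y) ^ 2 ^ s = 0 := by
        rw [sub_pow_char_pow, sub_eq_zero]
        exact hxy'
      exact sub_eq_zero.mp (pow_eq_zero_iff hq0 |>.mp h)
    let ψ : L ≃ₐ[K] L := AlgEquiv.ofBijective ψ' (Finite.injective_iff_bijective.mp hψinj)
    have hψw : ψ w = w ^ 2 ^ s := rfl
    have hne : (1 : L ≃ₐ[K] L) ≠ ψ := by
      intro h
      have h2 := congrArg (fun σ : L ≃ₐ[K] L => σ w) h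
      simp only [AlgEquiv.one_apply] at h2
      rw [hψw] at h2
      exact hw ((hrange w).mpr h2.symm)
    have hcardaut : Fintype.card (L ≃ₐ[K] L) = 2 := by
      rw [← Nat.card_eq_fintype_card, IsGalois.card_aut_eq_finrank, hfinrank]
    have huniv : ({1, ψ} : Finset (L ≃ₐ[K] L)) = Finset.univ := by
      apply Finset.eq_of_subset_of_card_le (Finset.subset_univ _)
      rw [Finset.card_univ, hcardaut, Finset.card_pair hne]
    rw [hι, trace_eq_sum_automorphisms]
    rw [← huniv, Finset.sum_pair hne, hψw]
    simp
  refine ⟨?_, ?_⟩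
  · rintro ⟨a, b⟩
    constructor
    · rw [hmul]
      simp [zero_pow hq0]
    · rw [hmul]
      simp [zero_pow hq0, one_pow]
  · rintro ⟨a, b⟩ ⟨c, d⟩ hzero
    rw [hmul] at hzero
    rw [Prod.ext_iff] at hzero
    obtain ⟨h1, h2⟩ := hzero
    simp only [Prod.fst_zero, Prod.snd_zero] at h1 h2
    by_cases hb : b = 0
    · subst hb
      by_cases ha : a = 0
      · subst ha; left; rfl
      · right
        simp only [zero_mul, mul_zero, add_zero, zero_pow hq0, zero_add] at h1 h2
        have hd : d = 0 := by
          rcases mul_eq_zero.mp h2 with h | h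
          · exact absurd (pow_eq_zero_iff hq0 |>.mp h) ha
          · exact h
        have hc : c = 0 := by
          rcases mul_eq_zero.mp h1 with h | h
          · exact absurd h ha
          · exact h
        rw [Prod.ext_iff]; exact ⟨hc, hd⟩
    · by_cases hd : d = 0
      · subst hd
        right
        simp only [zero_pow hq0, mul_zero, add_zero, zero_add] at h1 h2
        have hc : c = 0 := by
          rcases mul_eq_zero.mp h2 with h | h
          · exact absurd h hb
          · exact h
        rw [Prod.ext_iff]; exact ⟨hc, rfl⟩
      · exfalso
        -- main case : b ≠ 0, d ≠ 0
        have hE : a ^ 2 ^ s * a * d + b ^ 2 * d ^ 2 ^ s + w * (b ^ 2 ^ s * b) * d = 0 := by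
          linear_combination b * h1 + a * h2 - (a * b * c) * h2L
        have hEq : (a ^ 2 ^ s) ^ 2 ^ s * a ^ 2 ^ s * d ^ 2 ^ s
            + (b ^ 2) ^ 2 ^ s * (d ^ 2 ^ s) ^ 2 ^ s
            + w ^ 2 ^ s * ((b ^ 2 ^ s) ^ 2 ^ s * b ^ 2 ^ s) * d ^ 2 ^ s = 0 := by
          have h := congrArg (fun z : L => z ^ 2 ^ s) hE
          simp only [zero_pow hq0] at h
          rw [hfrobL, hfrobL, mul_pow, mul_pow, mul_pow, mul_pow, mul_pow, mul_pow] at h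
          exact h
        rw [hq2 a, hq2 b, hq2 d, pow_right_comm b 2 (2 ^ s)] at hEq
        -- hEq : a * a^q * d^q + (b^q)^2 * d + w^q * (b * b^q) * d^q = 0
        have hDet : (a ^ 2 ^ s * a + w * (b ^ 2 ^ s * b))
            * (a ^ 2 ^ s * a + w ^ 2 ^ s * (b ^ 2 ^ s * b)) + (b * b ^ 2 ^ s) ^ 2 = 0 := by
          have hD0 : ((a ^ 2 ^ s * a + w * (b ^ 2 ^ s * b))
              * (a ^ 2 ^ s * a + w ^ 2 ^ s * (b ^ 2 ^ s * b)) + (b * b ^ 2 ^ s) ^ 2) * d = 0 := by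
            linear_combination (a ^ 2 ^ s * a + w ^ 2 ^ s * (b ^ 2 ^ s * b)) * hE
              + b ^ 2 * hEq
              - ((a ^ 2 ^ s * a + w ^ 2 ^ s * (b ^ 2 ^ s * b)) * b ^ 2 * d ^ 2 ^ s) * h2L
          rcases mul_eq_zero.mp hD0 with h | h
          · exact h
          · exact absurd h hd
        -- descend to K
        obtain ⟨α, hα⟩ : a ^ 2 ^ s * a ∈ Set.range ι := by
          rw [hrange, mul_pow, hq2 a]; ring
        obtain ⟨β, hβ⟩ : b ^ 2 ^ s * b ∈ Set.range ι := by
          rw [hrange, mul_pow, hq2 b]; ring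
        obtain ⟨ν, hν⟩ : w * w ^ 2 ^ s ∈ Set.range ι := by
          rw [hrange, mul_pow, hq2 w]; ring
        have hβ0 : β ≠ 0 := by
          intro h
          rw [h, map_zero] at hβ
          rcases mul_eq_zero.mp hβ.symm with h' | h'
          · exact hb (pow_eq_zero_iff hq0 |>.mp h')
          · exact hb h'
        set T := Algebra.trace K L w with hTdef
        have hT : ι T = w + w ^ 2 ^ s := htrw
        have hT0 : T ≠ 0 := by
          intro h
          rw [h, map_zero] at hT
          have hwW : w ^ 2 ^ s = w := by linear_combination hT + w ^ 2 ^ s * h2L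
          exact hw ((hrange w).mpr hwW)
        have hKeq : α ^ 2 + T * α * β + (ν + 1) * β ^ 2 = 0 := by
          apply hinj
          rw [map_zero]
          simp only [map_add, map_mul, map_pow, map_one, hα, hβ, hν, hT]
          linear_combination hDet
        obtain ⟨k, hk⟩ := artin_schreier_two hs hK T⁻¹ htr
        have hTk : T ^ 2 * (k ^ 2 + k) ^ 2 = 1 := by
          rw [hk]; field_simp
        set z : K := α / β + T * k ^ 2 with hz
        have hβz : β * z = α + T * k ^ 2 * β := by
          rw [hz]; field_simp
        have hz' : z ^ 2 + T * z + ν = 0 := by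
          have key : β ^ 2 * (z ^ 2 + T * z + ν) = 0 := by
            linear_combination (β * z + α + T * k ^ 2 * β) * hβz + T * β * hβz
              + hKeq + β ^ 2 * hTk + (T * α * k ^ 2 * β - T ^ 2 * k ^ 3 * β ^ 2) * h2K
          rcases mul_eq_zero.mp key with h | h
          · exact absurd (pow_eq_zero_iff (by norm_num) |>.mp h) hβ0
          · exact h
        -- w and ι z are the two roots of X^2 + T X + ν
        have hquadw : w ^ 2 + ι T * w + ι ν = 0 := by
          rw [hT, hν]; linear_combination (w ^ 2 + w * w ^ 2 ^ s) * h2L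
        have hquadz : (ι z) ^ 2 + ι T * ι z + ι ν = 0 := by
          have := congrArg ι hz'
          simpa only [map_add, map_mul, map_pow, map_zero] using this
        have hroots : (w + ι z) * (w + ι z + ι T) = 0 := by
          linear_combination hquadw + hquadz + (w * ι z - ι ν) * h2L
        have hwrange : w ∈ Set.range ι := by
          rcases mul_eq_zero.mp hroots with h | h
          · exact ⟨z, by linear_combination - h + ι z * h2L⟩
          · refine ⟨z + T, ?_⟩
            rw [map_add]
            linear_combination - h + (ι z + ι T) * h2L
        exact hw hwrange
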